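/- arXiv:1601.04906 — 4 statements merged into one kernel-verified Lean document; each statement's English description precedes it below -/
import Mathlib

section
/- Let u : ℝ → ℝ be a C¹ 2π-periodic nonconstant function, and assume that for every point a with u'(a) = 0 one has u(2a − x) = u(x) for all x. Then the set {a ∈ [0, 2π) : u'(a) = 0} is finite. -/
theorem stmt_2 (u : ℝ → ℝ) (hu : ContDiff ℝ 1 u)
    (hper : ∀ x, u (x + 2 * Real.pi) = u x)
    (hnc : ∃ x y, u x ≠ u y)
    (hrefl : ∀ a, deriv u a = 0 → ∀ x, u (2 * a - x) = u x) :
    {a ∈ Set.Ico (0 : ℝ) (2 * Real.pi) | deriv u a = 0}.Finite := by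
  by_contra hfin
  set S := {a ∈ Set.Ico (0 : ℝ) (2 * Real.pi) | deriv u a = 0} with hSdef
  have hinf : S.Infinite := hfin
  obtain ⟨b, hb⟩ := hinf.nonempty
  -- the additive group of periods of u
  let G : AddSubgroup ℝ :=
  { carrier := {p | ∀ x, u (x + p) = u x}
    zero_mem' := by intro x; simp
    add_mem' := by
      intro p q hp hq x
      calc u (x + (p + q)) = u (x + q + p) := by ring_nf
        _ = u (x + q) := hp (x + q)
        _ = u x := hq x
    neg_mem' := by
      intro p hp x
      have h := hp (x + -p)
      rw [show x + -p + p = x from by ring] at h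
      exact h.symm }
  have hGmem : ∀ a ∈ S, ∀ c ∈ S, 2 * (a - c) ∈ G := by
    intro a ha c hc x
    calc u (x + 2 * (a - c)) = u (2 * a - (2 * c - x)) := by ring_nf
      _ = u (2 * c - x) := hrefl a ha.2 (2 * c - x)
      _ = u x := hrefl c hc.2 x
  have hGc : IsClosed (G : Set ℝ) := by
    have hset : (G : Set ℝ) = ⋂ x, {p | u (x + p) = u x} := by
      ext p; simp [Set.mem_iInter]; rfl
    rw [hset]
    exact isClosed_iInter fun x =>
      isClosed_eq (hu.continuous.comp (continuous_const.add continuous_id)) continuous_const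
  rcases AddSubgroup.dense_or_cyclic G with hd | ⟨g, hg⟩
  · -- dense case: u is constant, contradiction
    obtain ⟨x, y, hxy⟩ := hnc
    have hxyG : x - y ∈ G := hGc.closure_subset (hd (x - y))
    have h := hxyG y
    rw [show y + (x - y) = x from by ring] at h
    exact hxy h
  · by_cases hg0 : g = 0
    · -- trivial group : all critical points coincide
      apply hfin
      apply (Set.finite_singleton b).subset
      intro a ha
      have h := hGmem a ha b hb
      rw [hg, hg0] at h
      obtain ⟨n, hn⟩ := AddSubgroup.mem_closure_singleton.mp h
      simp at hn
      have : a = b := by linarith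
      simp [this]
    · -- cyclic case : critical points lie in a discrete bounded set
      apply hfin
      set N : ℤ := ⌈4 * Real.pi / |g|⌉ with hN
      apply ((Set.finite_Icc (-N) N).image (fun n : ℤ => b + (n : ℝ) * (g / 2))).subset
      intro a ha
      have h := hGmem a ha b hb
      rw [hg] at h
      obtain ⟨n, hn⟩ := AddSubgroup.mem_closure_singleton.mp h
      rw [zsmul_eq_mul] at hn
      have hgpos : (0:ℝ) < |g| := abs_pos.mpr hg0
      have habs : |(n : ℝ)| * |g| < 4 * Real.pi := by
        rw [← abs_mul, hn]
        have h1 : |a - b| < 2 * Real.pi := by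
          rw [abs_sub_lt_iff]
          exact ⟨by linarith [ha.1.1, ha.1.2, hb.1.1, hb.1.2],
            by linarith [ha.1.1, ha.1.2, hb.1.1, hb.1.2]⟩
        calc |2 * (a - b)| = 2 * |a - b| := by rw [abs_mul]; norm_num
          _ < 4 * Real.pi := by linarith
      have hle : |(n : ℝ)| ≤ 4 * Real.pi / |g| :=
        (le_div_iff₀ hgpos).mpr habs.le
      have hleN : |n| ≤ N := by
        have : (|n| : ℝ) ≤ (N : ℝ) := hle.trans (Int.le_ceil _)
        exact_mod_cast this
      refine ⟨n, ?_, ?_⟩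
      · exact Set.mem_Icc.mpr (abs_le.mp hleN)
      · linarith
end

section
/- Define ψ : ℝ → ℝ by ψ(t) = exp(∑_{k=1}^∞ (cos(2^{−k} π t) − 1)). Then for every natural number n ≥ 1, ψ(2ⁿ) ≥ exp(−2π − 2). -/
lemma aux_four_zpow (m : ℤ) (k : ℕ) : (4:ℝ)^(m - (k:ℤ)) = 4^m * (1/4:ℝ)^k := by
  rw [zpow_sub₀ (by norm_num : (4:ℝ) ≠ 0), zpow_natCast, one_div, inv_pow, div_eq_mul_inv]

lemma aux_two_sq (a : ℤ) : ((2:ℝ)^a)^2 = (4:ℝ)^a := by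
  rw [← zpow_natCast ((2:ℝ)^a) 2, ← zpow_mul, mul_comm, zpow_mul]
  norm_num

theorem stmt_11 (ψ : ℝ → ℝ)
    (hψ : ∀ t, ψ t =
      Real.exp (∑' k : ℕ, (Real.cos (2 ^ (-((k : ℤ) + 1)) * Real.pi * t) - 1))) :
    ∀ n : ℕ, 1 ≤ n → ψ (2 ^ n) ≥ Real.exp (-2 * Real.pi - 2) := by
  intro n hn
  rw [hψ, ge_iff_le, Real.exp_le_exp]
  set f : ℕ → ℝ := fun k => Real.cos (2 ^ (-((k : ℤ) + 1)) * Real.pi * 2 ^ n) - 1 with hf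
  have harg : ∀ k : ℕ, (2:ℝ) ^ (-((k : ℤ) + 1)) * Real.pi * 2 ^ n
      = (2:ℝ) ^ ((n : ℤ) - ((k:ℤ) + 1)) * Real.pi := by
    intro k
    rw [sub_eq_add_neg, zpow_add₀ (two_ne_zero), zpow_natCast]
    ring
  have hquad : ∀ x : ℝ, |Real.cos x - 1| ≤ x ^ 2 / 2 := by
    intro x
    rw [abs_sub_comm, abs_of_nonneg (by linarith [Real.cos_le_one x])]
    linarith [Real.one_sub_sq_div_two_le_cos (x := x)]
  have hsq : ∀ k : ℕ, ((2:ℝ) ^ ((n : ℤ) - ((k:ℤ) + 1)) * Real.pi) ^ 2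
      = (Real.pi ^ 2 * (4:ℝ) ^ ((n:ℤ) - 1)) * (1/4 : ℝ) ^ k := by
    intro k
    rw [mul_pow, aux_two_sq, show (n : ℤ) - ((k:ℤ) + 1) = ((n:ℤ) - 1) - (k:ℤ) by ring,
      aux_four_zpow]
    ring
  have hbound : ∀ k : ℕ, |f k| ≤ (Real.pi ^ 2 * (4:ℝ) ^ ((n:ℤ) - 1) / 2) * (1/4 : ℝ) ^ k := by
    intro k
    rw [hf]
    simp only
    rw [harg k]
    calc |Real.cos ((2:ℝ) ^ ((n : ℤ) - ((k:ℤ) + 1)) * Real.pi) - 1|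
        ≤ ((2:ℝ) ^ ((n : ℤ) - ((k:ℤ) + 1)) * Real.pi) ^ 2 / 2 := hquad _
      _ = (Real.pi ^ 2 * (4:ℝ) ^ ((n:ℤ) - 1) / 2) * (1/4 : ℝ) ^ k := by rw [hsq k]; ring
  have hsummable : Summable f := by
    apply Summable.of_abs
    apply Summable.of_nonneg_of_le (fun k => abs_nonneg _) hbound
    exact (summable_geometric_of_lt_one (by norm_num) (by norm_num)).mul_left _
  rw [← Summable.sum_add_tsum_nat_add n hsummable]
  have hfin : ∑ i ∈ Finset.range n, f i = -2 := by
    have hterm : ∀ i ∈ Finset.range n, f i = if i = n - 1 then -2 else 0 := by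
      intro i hi
      rw [Finset.mem_range] at hi
      rw [hf]; simp only
      rw [harg i]
      by_cases h : i = n - 1
      · subst h
        rw [show (n : ℤ) - (((n-1 : ℕ):ℤ) + 1) = 0 by omega]
        simp [Real.cos_pi]
        norm_num
      · obtain ⟨m, hm⟩ : ∃ m : ℕ, (n : ℤ) - ((i:ℤ) + 1) = (m : ℤ) + 1 :=
          ⟨n - i - 2, by omega⟩
        rw [hm]
        rw [show (2:ℝ) ^ ((m:ℤ) + 1) * Real.pi = ((2^m : ℕ) : ℝ) * (2 * Real.pi) by
          rw [zpow_add₀ (two_ne_zero), zpow_natCast]; push_cast; ring]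
        rw [Real.cos_nat_mul_two_pi]
        simp [h]
    rw [Finset.sum_congr rfl hterm,
      Finset.sum_ite_eq' (Finset.range n) (n-1) (fun _ => (-2:ℝ))]
    simp [Finset.mem_range, Nat.sub_lt (by omega : 0 < n) one_pos]
  rw [hfin]
  have htail : -(Real.pi ^ 2 / 6) ≤ ∑' k : ℕ, f (k + n) := by
    have hL : ∀ k : ℕ, (-(Real.pi ^ 2 / 8)) * (1/4 : ℝ) ^ k ≤ f (k + n) := by
      intro k
      rw [hf]; simp only
      rw [harg (k + n)]
      have he : ((n : ℤ) - (((k + n : ℕ):ℤ) + 1)) = (0 : ℤ) - ((k:ℤ) + 1) := by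
        push_cast; ring
      rw [he]
      have hx := Real.one_sub_sq_div_two_le_cos
        (x := (2:ℝ) ^ ((0:ℤ) - (((k:ℤ)) + 1)) * Real.pi)
      have hsq2 : ((2:ℝ) ^ ((0:ℤ) - ((k:ℤ) + 1)) * Real.pi) ^ 2
          = (Real.pi ^ 2 / 4) * (1/4 : ℝ) ^ k := by
        rw [mul_pow, aux_two_sq, show (0:ℤ) - ((k:ℤ) + 1) = (-1 : ℤ) - (k:ℤ) by ring,
          aux_four_zpow]
        norm_num
        ring
      rw [hsq2] at hx
      linarith
    have hsum2 : Summable (fun k : ℕ => f (k + n)) :=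
      (summable_nat_add_iff n).mpr hsummable
    have hsumL : Summable (fun k : ℕ => (-(Real.pi ^ 2 / 8)) * (1/4 : ℝ) ^ k) :=
      (summable_geometric_of_lt_one (by norm_num) (by norm_num)).mul_left _
    calc -(Real.pi ^ 2 / 6) = ∑' k : ℕ, (-(Real.pi ^ 2 / 8)) * (1/4 : ℝ) ^ k := by
          rw [tsum_mul_left, tsum_geometric_of_lt_one (by norm_num) (by norm_num)]
          ring
      _ ≤ ∑' k : ℕ, f (k + n) := Summable.tsum_le_tsum hL hsumL hsum2
  have hpi : Real.pi ^ 2 / 6 ≤ 2 * Real.pi := by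
    nlinarith [Real.pi_le_four, Real.pi_pos]
  linarith
end

section
/- Let f(t) = −∑_{k=1}^∞ 2^{−k} π sin(2^{−k} π t). Then (1/t) ∫₀ᵗ f(s) ds → 0 as |t| → ∞. -/
open Real

noncomputable def aa (k : ℕ) : ℝ := 2 ^ (-((k : ℤ) + 1)) * Real.pi

lemma aa_eq (k : ℕ) : aa k = Real.pi * (1/2)^(k+1) := by
  have : (-((k : ℤ) + 1)) = -(((k+1 : ℕ)) : ℤ) := by push_cast; ring
  rw [aa, this, zpow_neg, zpow_natCast, ← inv_pow, mul_comm]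
  norm_num

lemma aa_pos (k : ℕ) : 0 < aa k := by
  rw [aa_eq]; positivity

lemma aa_summable : Summable aa := by
  have h : Summable (fun k : ℕ => (Real.pi * (1/2)) * (1/2:ℝ)^k) :=
    (summable_geometric_of_lt_one (by norm_num) (by norm_num)).mul_left _
  exact h.congr fun k => by rw [aa_eq]; ring

lemma aa_tail (N : ℕ) : ∑' k : ℕ, aa (k + N) = Real.pi * (1/2)^N := by
  have h : ∀ k : ℕ, aa (k + N) = (Real.pi * (1/2)^(N+1)) * (1/2:ℝ)^k := by
    intro k; rw [aa_eq]; ring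
  rw [tsum_congr h, tsum_mul_left, tsum_geometric_two]
  ring

noncomputable def gc (k : ℕ) : C(ℝ, ℝ) :=
  ⟨fun s => aa k * Real.sin (aa k * s), by continuity⟩

lemma one_sub_cos_nonneg (x : ℝ) : 0 ≤ 1 - Real.cos x := by
  have := Real.cos_le_one x; linarith

lemma one_sub_cos_le_two (x : ℝ) : 1 - Real.cos x ≤ 2 := by
  have := Real.neg_one_le_cos x; linarith

lemma one_sub_cos_le_abs (x : ℝ) : 1 - Real.cos x ≤ |x| := by
  have h := Real.cos_sub_cos 0 x
  simp only [Real.cos_zero, zero_add, zero_sub, neg_div, Real.sin_neg] at h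
  have h0 : Real.sin (x/2) * Real.sin (x/2) = |Real.sin (x/2)| * |Real.sin (x/2)| :=
    (abs_mul_abs_self _).symm
  have h1 : |Real.sin (x/2)| ≤ |x/2| := Real.abs_sin_le_abs
  have h2 : |Real.sin (x/2)| ≤ 1 := Real.abs_sin_le_one _
  have h3 : |x/2| = |x|/2 := by rw [abs_div]; simp
  have h4 : (0:ℝ) ≤ |Real.sin (x/2)| := abs_nonneg _
  nlinarith [h]

lemma summable_one_sub_cos (t : ℝ) : Summable (fun k => 1 - Real.cos (aa k * t)) := by
  apply Summable.of_nonneg_of_le (fun k => one_sub_cos_nonneg _)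
    (fun k => (one_sub_cos_le_abs _).trans_eq (by rw [abs_mul, abs_of_pos (aa_pos k)]))
  exact aa_summable.mul_right |t|

lemma integral_gc (k : ℕ) (t : ℝ) :
    ∫ s in (0:ℝ)..t, gc k s = 1 - Real.cos (aa k * t) := by
  have hd : ∀ s ∈ Set.uIcc (0:ℝ) t, HasDerivAt (fun s => 1 - Real.cos (aa k * s))
      (aa k * Real.sin (aa k * s)) s := by
    intro s _
    have h1 : HasDerivAt (fun s : ℝ => aa k * s) (aa k) s := by
      simpa using (hasDerivAt_id s).const_mul (aa k)
    have h2 := (Real.hasDerivAt_cos (aa k * s)).comp s h1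
    have h3 := h2.const_sub 1
    exact h3.congr_deriv (by ring)
  have h := intervalIntegral.integral_eq_sub_of_hasDerivAt hd
    (Continuous.intervalIntegrable (by continuity) 0 t)
  show (∫ s in (0:ℝ)..t, aa k * Real.sin (aa k * s)) = 1 - Real.cos (aa k * t)
  rw [h]; simp

lemma key_integral (f : ℝ → ℝ)
    (hf : ∀ t, f t = -∑' k : ℕ,
      2 ^ (-((k : ℤ) + 1)) * Real.pi * Real.sin (2 ^ (-((k : ℤ) + 1)) * Real.pi * t)) (t : ℝ) :
    ∫ s in (0:ℝ)..t, f s = -∑' k : ℕ, (1 - Real.cos (aa k * t)) := by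
  have hsum : Summable fun k : ℕ =>
      ‖(gc k).restrict (⟨Set.uIcc 0 t, isCompact_uIcc⟩ : TopologicalSpace.Compacts ℝ)‖ := by
    apply Summable.of_nonneg_of_le (fun k => norm_nonneg _) _ aa_summable
    intro k
    apply ContinuousMap.norm_le _ (aa_pos k).le |>.2
    intro x
    simp only [ContinuousMap.restrict_apply, gc, ContinuousMap.coe_mk, Real.norm_eq_abs,
      abs_mul, abs_of_pos (aa_pos k)]
    exact mul_le_of_le_one_right (aa_pos k).le (Real.abs_sin_le_one _)
  have h1 : ∀ s, f s = -∑' k : ℕ, gc k s := by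
    intro s; rw [hf s]; rfl
  calc ∫ s in (0:ℝ)..t, f s = ∫ s in (0:ℝ)..t, -∑' k : ℕ, gc k s := by
        apply intervalIntegral.integral_congr; intro s _; exact h1 s
    _ = -∫ s in (0:ℝ)..t, ∑' k : ℕ, gc k s := intervalIntegral.integral_neg
    _ = -∑' k : ℕ, ∫ s in (0:ℝ)..t, gc k s := by
        rw [intervalIntegral.tsum_intervalIntegral_eq_of_summable_norm hsum]
    _ = -∑' k : ℕ, (1 - Real.cos (aa k * t)) := by
        congr 1; exact tsum_congr fun k => integral_gc k t

lemma key_bound (f : ℝ → ℝ)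
    (hf : ∀ t, f t = -∑' k : ℕ,
      2 ^ (-((k : ℤ) + 1)) * Real.pi * Real.sin (2 ^ (-((k : ℤ) + 1)) * Real.pi * t))
    (t : ℝ) (N : ℕ) :
    |∫ s in (0:ℝ)..t, f s| ≤ 2 * N + Real.pi * (1/2)^N * |t| := by
  rw [key_integral f hf t, abs_neg]
  have hs := summable_one_sub_cos t
  rw [abs_of_nonneg (tsum_nonneg fun k => one_sub_cos_nonneg _)]
  rw [← Summable.sum_add_tsum_nat_add N hs]
  have h1 : ∑ k ∈ Finset.range N, (1 - Real.cos (aa k * t)) ≤ 2 * N := by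
    calc _ ≤ ∑ _k ∈ Finset.range N, (2:ℝ) :=
          Finset.sum_le_sum fun k _ => one_sub_cos_le_two _
      _ = 2 * N := by simp [mul_comm]
  have h2 : ∑' k : ℕ, (1 - Real.cos (aa (k + N) * t)) ≤ Real.pi * (1/2)^N * |t| := by
    have := Summable.tsum_le_tsum (f := fun k => 1 - Real.cos (aa (k + N) * t))
      (g := fun k => aa (k + N) * |t|)
      (fun k => (one_sub_cos_le_abs _).trans_eq (by rw [abs_mul, abs_of_pos (aa_pos _)]))
      ((summable_nat_add_iff N).2 hs)
      (((summable_nat_add_iff N).2 aa_summable).mul_right |t|)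
    rwa [tsum_mul_right, aa_tail] at this
  linarith

theorem stmt_14 (f : ℝ → ℝ)
    (hf : ∀ t, f t = -∑' k : ℕ,
      2 ^ (-((k : ℤ) + 1)) * Real.pi * Real.sin (2 ^ (-((k : ℤ) + 1)) * Real.pi * t)) :
    Filter.Tendsto (fun t : ℝ => (1 / t) * ∫ s in (0:ℝ)..t, f s)
      Filter.atTop (nhds 0) ∧
    Filter.Tendsto (fun t : ℝ => (1 / t) * ∫ s in (0:ℝ)..t, f s)
      Filter.atBot (nhds 0) := by
  have key : ∀ ε > 0, ∃ C : ℝ, 1 ≤ C ∧ ∀ t : ℝ, C ≤ |t| →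
      |(1 / t) * ∫ s in (0:ℝ)..t, f s| < ε := by
    intro ε hε
    obtain ⟨N, hN⟩ : ∃ N : ℕ, Real.pi * (1/2)^N < ε / 2 := by
      obtain ⟨N, hN⟩ := exists_pow_lt_of_lt_one (div_pos (half_pos hε) Real.pi_pos)
        (by norm_num : (1/2:ℝ) < 1)
      exact ⟨N, by rw [mul_comm, ← lt_div_iff₀ Real.pi_pos]; exact hN⟩
    refine ⟨max 1 (4 * N / ε), le_max_left _ _, fun t ht => ?_⟩
    have ht1 : (1:ℝ) ≤ |t| := le_trans (le_max_left _ _) ht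
    have ht0 : (0:ℝ) < |t| := lt_of_lt_of_le one_pos ht1
    have htn : t ≠ 0 := fun h => by simp [h] at ht0
    have hb := key_bound f hf t N
    have h4 : 4 * (N:ℝ) / ε ≤ |t| := le_trans (le_max_right _ _) ht
    rw [div_le_iff₀ hε] at h4
    have h2 : 2 * (N:ℝ) ≤ ε / 2 * |t| := by nlinarith
    have h3 : Real.pi * (1/2)^N * |t| < ε / 2 * |t| := by
      exact mul_lt_mul_of_pos_right hN ht0
    have h5 : |∫ s in (0:ℝ)..t, f s| < ε * |t| := by nlinarith
    have heq : |(1 / t) * ∫ s in (0:ℝ)..t, f s| = |∫ s in (0:ℝ)..t, f s| / |t| := by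
      rw [abs_mul, abs_div, abs_one, one_div, mul_comm, ← div_eq_mul_inv]
    rw [heq, div_lt_iff₀ ht0]
    linarith
  constructor
  · rw [Metric.tendsto_nhds]
    intro ε hε
    obtain ⟨C, hC1, hC⟩ := key ε hε
    filter_upwards [Filter.eventually_ge_atTop C] with t ht
    rw [Real.dist_eq, sub_zero]
    exact hC t (le_trans ht (le_abs_self t))
  · rw [Metric.tendsto_nhds]
    intro ε hε
    obtain ⟨C, hC1, hC⟩ := key ε hε
    filter_upwards [Filter.eventually_le_atBot (-C)] with t ht
    rw [Real.dist_eq, sub_zero]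
    exact hC t (le_trans (by linarith) (neg_le_abs t))
end

section
/- Let (Y, d) be a compact metric space with a continuous flow σ : Y × ℝ → Y. Suppose the flow is distal, i.e., for every pair y₁ ≠ y₂ there is δ > 0 with d(σ(y₁,t), σ(y₂,t)) > δ for all t ∈ ℝ. Let K ⊆ X × Y be a compact invariant set for a flow Π on X × Y whose second coordinate is σ, assume Π restricted to K is distal, Y is minimal under σ, K is minimal under Π, and the projection p : K → Y is surjective. If p⁻¹(y₀) ∩ K is a singleton for some y₀ ∈ Y, then p⁻¹(y) ∩ K is a singleton for every y ∈ Y. -/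
theorem stmt_16 {X Y : Type*} [MetricSpace X] [MetricSpace Y]
    [CompactSpace Y]
    (σ : Y → ℝ → Y)
    (hσcont : Continuous fun p : Y × ℝ => σ p.1 p.2)
    (hσ0 : ∀ y, σ y 0 = y)
    (hσadd : ∀ y s t, σ (σ y s) t = σ y (s + t))
    (hσdistal : ∀ y₁ y₂ : Y, y₁ ≠ y₂ → ∃ δ > (0:ℝ), ∀ t, dist (σ y₁ t) (σ y₂ t) > δ)
    (Phi : X × Y → ℝ → X × Y)
    (hPhisnd : ∀ p t, (Phi p t).2 = σ p.2 t)
    (hPhi0 : ∀ p, Phi p 0 = p)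
    (hPhiadd : ∀ p s t, Phi (Phi p s) t = Phi p (s + t))
    (hPhicont : Continuous fun q : (X × Y) × ℝ => Phi q.1 q.2)
    (K : Set (X × Y)) (hKcpt : IsCompact K)
    (hKinv : ∀ p ∈ K, ∀ t, Phi p t ∈ K)
    (hKdistal : ∀ p ∈ K, ∀ q ∈ K, p ≠ q →
      ∃ δ > (0:ℝ), ∀ t, dist (Phi p t) (Phi q t) > δ)
    (hYmin : ∀ S : Set Y, IsClosed S → S.Nonempty → (∀ y ∈ S, ∀ t, σ y t ∈ S) →
      S = Set.univ)
    (hKmin : ∀ S : Set (X × Y), S ⊆ K → IsClosed S → S.Nonempty →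
      (∀ p ∈ S, ∀ t, Phi p t ∈ S) → S = K)
    (hsurj : ∀ y : Y, ∃ x : X, (x, y) ∈ K)
    (hone : ∃ y₀ : Y, ∃ x₀ : X, {p ∈ K | p.2 = y₀} = {(x₀, y₀)}) :
    ∀ y : Y, ∃ x : X, {p ∈ K | p.2 = y} = {(x, y)} := by
  obtain ⟨y₀, x₀, hfib⟩ := hone
  -- key: any two points of K in the same fiber over y are equal
  have key : ∀ y : Y, ∀ p ∈ K, ∀ q ∈ K, p.2 = y → q.2 = y → p = q := by
    intro y p hp q hq hpy hqy
    by_contra hne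
    obtain ⟨δ, hδ, hdist⟩ := hKdistal p hp q hq hne
    -- orbit of y is dense
    have hdense : y₀ ∈ closure {z | ∃ t, σ y t = z} := by
      have hinv : ∀ z ∈ closure {z | ∃ t, σ y t = z}, ∀ t,
          σ z t ∈ closure {z | ∃ t, σ y t = z} := by
        intro z hz t
        have hg : Continuous fun w => σ w t :=
          hσcont.comp (continuous_id.prodMk continuous_const)
        refine map_mem_closure (f := fun w => σ w t) hg hz ?_
        rintro w ⟨s, rfl⟩
        exact ⟨s + t, (hσadd y s t).symm⟩
      have := hYmin (closure {z | ∃ t, σ y t = z}) isClosed_closure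
        ⟨y, subset_closure ⟨0, hσ0 y⟩⟩ hinv
      rw [this]; trivial
    obtain ⟨u, hu, hulim⟩ := mem_closure_iff_seq_limit.mp hdense
    choose t ht using hu
    obtain ⟨p', hp'K, φ, hφ, hpt⟩ := hKcpt.tendsto_subseq
      (x := fun n => Phi p (t n)) (fun n => hKinv p hp (t n))
    obtain ⟨q', hq'K, ψ, hψ, hqt⟩ := hKcpt.tendsto_subseq
      (x := fun n => Phi q (t (φ n))) (fun n => hKinv q hq (t (φ n)))
    have hpt2 : Filter.Tendsto (fun n => Phi p (t (φ (ψ n)))) Filter.atTop (nhds p') :=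
      hpt.comp hψ.tendsto_atTop
    -- second coordinates tend to y₀
    have hsnd : ∀ r : X × Y, r ∈ K → r.2 = y →
        Filter.Tendsto (fun n => (Phi r (t (φ (ψ n)))).2) Filter.atTop (nhds y₀) := by
      intro r hr hry
      have : (fun n => (Phi r (t (φ (ψ n)))).2) = fun n => u (φ (ψ n)) := by
        funext n
        rw [hPhisnd, hry, ht]
      rw [this]
      exact (hulim.comp hφ.tendsto_atTop).comp hψ.tendsto_atTop
    have hp'2 : p'.2 = y₀ :=
      tendsto_nhds_unique ((continuous_snd.tendsto p').comp hpt2) (hsnd p hp hpy)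
    have hq'2 : q'.2 = y₀ :=
      tendsto_nhds_unique ((continuous_snd.tendsto q').comp hqt) (hsnd q hq hqy)
    have hp'fib : p' = (x₀, y₀) := by
      have : p' ∈ {p ∈ K | p.2 = y₀} := ⟨hp'K, hp'2⟩
      rw [hfib] at this; exact this
    have hq'fib : q' = (x₀, y₀) := by
      have : q' ∈ {p ∈ K | p.2 = y₀} := ⟨hq'K, hq'2⟩
      rw [hfib] at this; exact this
    have hd : Filter.Tendsto
        (fun n => dist (Phi p (t (φ (ψ n)))) (Phi q (t (φ (ψ n))))) Filter.atTop
        (nhds (dist p' q')) := hpt2.dist hqt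
    have : δ ≤ dist p' q' := ge_of_tendsto' hd fun n => le_of_lt (hdist _)
    rw [hp'fib, hq'fib, dist_self] at this
    exact absurd (lt_of_lt_of_le hδ this) (lt_irrefl 0)
  intro y
  obtain ⟨x, hx⟩ := hsurj y
  refine ⟨x, ?_⟩
  ext r
  simp only [Set.mem_setOf_eq, Set.mem_singleton_iff]
  constructor
  · rintro ⟨hrK, hry⟩
    exact key y r hrK (x, y) hx hry rfl
  · rintro rfl
    exact ⟨hx, rfl⟩
end
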